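/- arXiv:1208.5894 — 4 statements merged into one kernel-verified Lean document; each statement's English description precedes it below -/
import Mathlib

section
/- Let A be a nonnegative matrix such that Av = 0 for some v. Then the set of rows having a positive entry in some column of I⁻(v) equals the set of rows having a positive entry in some column of I⁺(v); i.e., N(I⁻(v)) = N(I⁺(v)), where N(S) = {i : A_{ij} > 0 for some j ∈ S}. -/
open Matrix

lemma sum_zero_neg_pos {n : ℕ} (f : Fin n → ℝ) (h : ∑ j, f j = 0)
    {j : Fin n} (hj : f j < 0) : ∃ k, 0 < f k := by
  by_contra hc
  push_neg at hc
  have hlt : ∑ k, f k < ∑ k : Fin n, (0 : ℝ) := by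
    apply Finset.sum_lt_sum
    · intro k _; exact hc k
    · exact ⟨j, Finset.mem_univ j, hj⟩
  simp [h] at hlt

/-- for a nonnegative matrix `A` with `A v = 0`, the rows having a
positive entry in some column of `I⁻(v)` coincide with the rows having a
positive entry in some column of `I⁺(v)`. -/
theorem stmt1 {m n : ℕ} (A : Matrix (Fin m) (Fin n) ℝ)
    (hA : ∀ i j, 0 ≤ A i j) (v : Fin n → ℝ) (hv : A.mulVec v = 0) :
    {i : Fin m | ∃ j, v j < 0 ∧ 0 < A i j} =
      {i : Fin m | ∃ j, 0 < v j ∧ 0 < A i j} := by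
  ext i
  have hrow : ∑ j, A i j * v j = 0 := by
    have := congrFun hv i
    simpa [Matrix.mulVec, dotProduct] using this
  constructor
  · rintro ⟨j, hvj, hAij⟩
    obtain ⟨k, hk⟩ := sum_zero_neg_pos _ hrow (mul_neg_of_pos_of_neg hAij hvj)
    have hAk : 0 < A i k := by
      rcases lt_or_eq_of_le (hA i k) with h | h
      · exact h
      · exfalso; rw [← h] at hk; simp at hk
    exact ⟨k, by nlinarith [hA i k], hAk⟩
  · rintro ⟨j, hvj, hAij⟩
    have hpos : (fun k => -(A i k * v k)) j < 0 := by
      simpa using mul_pos hAij hvj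
    obtain ⟨k, hk⟩ := sum_zero_neg_pos (fun k => -(A i k * v k)) (by simpa using hrow) hpos
    simp only [neg_pos] at hk
    have hAk : 0 < A i k := by
      rcases lt_or_eq_of_le (hA i k) with h | h
      · exact h
      · exfalso; rw [← h] at hk; simp at hk
    exact ⟨k, by nlinarith, hAk⟩
end

section
/- Let A ∈ ℝ^{m×n} and let x* ∈ {0,1}ⁿ be a binary vector. Then x* is the unique solution of {x ∈ [0,1]ⁿ : Ax = Ax*} if and only if there is no nonzero v ∈ ker(A) with v_j ≤ 0 for all j ∈ supp(x*) and v_j ≥ 0 for all j ∉ supp(x*). -/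
open Matrix

/-- a binary vector `x*` is the unique solution of
`{x ∈ [0,1]ⁿ : Ax = Ax*}` iff there is no nonzero `v ∈ ker A` with
`v_j ≤ 0` on `supp(x*)` and `v_j ≥ 0` off `supp(x*)`. -/
theorem stmt3 {m n : ℕ} (A : Matrix (Fin m) (Fin n) ℝ)
    (xstar : Fin n → ℝ) (hx : ∀ j, xstar j = 0 ∨ xstar j = 1) :
    {x : Fin n → ℝ | A.mulVec x = A.mulVec xstar ∧ ∀ j, 0 ≤ x j ∧ x j ≤ 1}
        = {xstar} ↔
      ¬ ∃ v : Fin n → ℝ, v ≠ 0 ∧ A.mulVec v = 0 ∧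
        (∀ j, xstar j ≠ 0 → v j ≤ 0) ∧ (∀ j, xstar j = 0 → 0 ≤ v j) := by
  constructor
  · intro hset
    rintro ⟨v, hv0, hker, hpos, hneg⟩
    set S := ∑ j, |v j| with hSdef
    have hS : 0 ≤ S := Finset.sum_nonneg fun j _ => abs_nonneg _
    set t : ℝ := (1 + S)⁻¹ with htdef
    have ht : 0 < t := by positivity
    have hbd : ∀ j, t * |v j| ≤ 1 := by
      intro j
      have h1 : |v j| ≤ S :=
        Finset.single_le_sum (f := fun j => |v j|) (fun i _ => abs_nonneg _)
          (Finset.mem_univ j)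
      have h2 : t * |v j| ≤ t * (1 + S) := by
        apply mul_le_mul_of_nonneg_left _ ht.le
        linarith
      rw [inv_mul_cancel₀ (by positivity)] at h2
      exact h2
    have hmem : (xstar + t • v) ∈
        {x : Fin n → ℝ | A.mulVec x = A.mulVec xstar ∧ ∀ j, 0 ≤ x j ∧ x j ≤ 1} := by
      constructor
      · rw [Matrix.mulVec_add, Matrix.mulVec_smul, hker]
        simp
      · intro j
        have hb := hbd j
        have habs := abs_le.mp (abs_le.mpr ⟨neg_abs_le (v j), le_abs_self (v j)⟩)
        rcases hx j with h | h
        · have hv := hneg j h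
          simp only [Pi.add_apply, Pi.smul_apply, smul_eq_mul, h, zero_add]
          constructor
          · positivity
          · calc t * v j ≤ t * |v j| := by
                  exact mul_le_mul_of_nonneg_left (le_abs_self _) ht.le
              _ ≤ 1 := hb
        · have hv := hpos j (by rw [h]; norm_num)
          simp only [Pi.add_apply, Pi.smul_apply, smul_eq_mul, h]
          have : -(t * |v j|) ≤ t * v j := by
            have := mul_le_mul_of_nonneg_left (neg_abs_le (v j)) ht.le
            linarith [this]
          constructor
          · linarith
          · nlinarith
    rw [hset] at hmem
    have : t • v = 0 := by
      have := hmem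
      simp only [Set.mem_singleton_iff] at this
      have h' : xstar + t • v = xstar + 0 := by rw [this]; simp
      exact add_left_cancel h'
    rcases smul_eq_zero.mp this with h | h
    · exact absurd h ht.ne'
    · exact hv0 h
  · intro hnov
    ext x
    simp only [Set.mem_setOf_eq, Set.mem_singleton_iff]
    constructor
    · rintro ⟨hAx, hb⟩
      by_contra hne
      apply hnov
      refine ⟨x - xstar, sub_ne_zero.mpr hne,
        by rw [Matrix.mulVec_sub, hAx, sub_self], ?_, ?_⟩
      · intro j hj
        rcases hx j with h | h
        · exact absurd h hj
        · simp only [Pi.sub_apply, h]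
          linarith [(hb j).2]
      · intro j hj
        simp only [Pi.sub_apply, hj, sub_zero]
        exact (hb j).1
    · rintro rfl
      exact ⟨rfl, fun j => by rcases hx j with h | h <;> simp [h]⟩
end

section
/- Let A be a nonnegative matrix with exactly ℓ nonzero entries in each column, and let r₀ be its complete (Kruskal) rank, i.e., the maximal integer such that every set of r₀ columns of A is linearly independent. Then every nonzero null space vector v of A satisfies |I⁻(v)| ≥ r₀/ℓ. -/
open Matrix

/-- Every set of `r` columns of `A` is linearly independent. -/
def colsIndep {m n : ℕ} (A : Matrix (Fin m) (Fin n) ℝ) (r : ℕ) : Prop :=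
  ∀ T : Finset (Fin n), T.card = r →
    LinearIndependent ℝ (fun j : T => (Aᵀ (j : Fin n)))

/-- Any set of at most `r₀` columns is linearly independent. -/
lemma colsIndep_subset {m n r₀ : ℕ} (A : Matrix (Fin m) (Fin n) ℝ)
    (hind : colsIndep A r₀) (hr₀n : r₀ ≤ n) (S : Finset (Fin n)) (hS : S.card ≤ r₀) :
    LinearIndependent ℝ (fun j : S => (Aᵀ (j : Fin n))) := by
  obtain ⟨T, hST, -, hT⟩ := Finset.exists_subsuperset_card_eq (Finset.subset_univ S) hS
    (by simpa using hr₀n)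
  have hTind := hind T hT
  have e : S → T := fun j => ⟨(j : Fin n), hST j.2⟩
  have : LinearIndependent ℝ ((fun j : T => (Aᵀ (j : Fin n))) ∘
      (fun j : S => (⟨(j : Fin n), hST j.2⟩ : T))) :=
    hTind.comp _ (fun a b hab => Subtype.ext (by
      simpa using congrArg (fun x : T => (x : Fin n)) hab))
  exact this

/-- if `A ≥ 0` has exactly `ℓ` nonzero entries in each column and
complete (Kruskal) rank `r₀`, then every nonzero null space vector `v`
satisfies `|I⁻(v)| ≥ r₀ / ℓ`. -/
theorem stmt5 {m n ℓ r₀ : ℕ} (A : Matrix (Fin m) (Fin n) ℝ)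
    (hA : ∀ i j, 0 ≤ A i j)
    (hdeg : ∀ j : Fin n, (Finset.univ.filter (fun i => 0 < A i j)).card = ℓ)
    (hr : IsGreatest {r : ℕ | r ≤ n ∧ colsIndep A r} r₀)
    (v : Fin n → ℝ) (hv : A.mulVec v = 0) (hv0 : v ≠ 0) :
    (r₀ : ℝ) / ℓ ≤ (Finset.univ.filter (fun i => v i < 0)).card := by
  classical
  obtain ⟨⟨hr₀n, hind⟩, -⟩ := hr
  set N : Finset (Fin n) := Finset.univ.filter (fun j => v j < 0) with hNdef
  set R : Finset (Fin m) := Finset.univ.filter (fun i => ∃ j ∈ N, 0 < A i j) with hRdef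
  -- row equations
  have hrow : ∀ i, ∑ j, A i j * v j = 0 := by
    intro i
    have := congrFun hv i
    simpa [Matrix.mulVec, dotProduct] using this
  -- |R| ≤ |N| * ℓ
  have hRcard : R.card ≤ N.card * ℓ := by
    have hsub : R ⊆ N.biUnion (fun j => Finset.univ.filter (fun i => 0 < A i j)) := by
      intro i hi
      rw [hRdef, Finset.mem_filter] at hi
      obtain ⟨j, hjN, hij⟩ := hi.2
      exact Finset.mem_biUnion.2 ⟨j, hjN, Finset.mem_filter.2 ⟨Finset.mem_univ _, hij⟩⟩
    calc R.card ≤ _ := Finset.card_le_card hsub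
      _ ≤ ∑ j ∈ N, (Finset.univ.filter (fun i => 0 < A i j)).card :=
        Finset.card_biUnion_le
      _ = ∑ j ∈ N, ℓ := by simp [hdeg]
      _ = N.card * ℓ := by simp [Finset.sum_const, Nat.smul_one_eq_cast]
  set S : Finset (Fin n) := Finset.univ.filter (fun j => v j ≠ 0) with hSdef
  -- every nonzero column entry of a support column lies in R
  have F1 : ∀ j ∈ S, ∀ i, 0 < A i j → i ∈ R := by
    intro j hjS i hij
    rw [hSdef, Finset.mem_filter] at hjS
    rcases lt_or_gt_of_ne hjS.2 with hneg | hpos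
    · exact Finset.mem_filter.2 ⟨Finset.mem_univ _,
        ⟨j, Finset.mem_filter.2 ⟨Finset.mem_univ _, hneg⟩, hij⟩⟩
    · -- v j > 0 : there must be a negative term in row i
      by_contra hiR
      have hall : ∀ j' ∈ Finset.univ, (0:ℝ) ≤ A i j' * v j' := by
        intro j' _
        by_contra hlt
        push_neg at hlt
        have hAj' : 0 < A i j' := lt_of_le_of_ne (hA i j')
          (by rintro h; rw [← h] at hlt; simp at hlt)
        have hvj' : v j' < 0 := by
          by_contra hge
          push_neg at hge
          exact absurd (mul_nonneg (hA i j') hge) (not_le.2 hlt)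
        exact hiR (Finset.mem_filter.2 ⟨Finset.mem_univ _,
          ⟨j', Finset.mem_filter.2 ⟨Finset.mem_univ _, hvj'⟩, hAj'⟩⟩)
      have hpos' : 0 < ∑ j', A i j' * v j' :=
        Finset.sum_pos' hall ⟨j, Finset.mem_univ _, mul_pos hij hpos⟩
      rw [hrow i] at hpos'
      exact lt_irrefl _ hpos'
  -- columns in S vanish off R
  have F2 : ∀ j ∈ S, ∀ i, i ∉ R → A i j = 0 := by
    intro j hj i hiR
    by_contra hne
    exact hiR (F1 j hj i (lt_of_le_of_ne (hA i j) (Ne.symm hne)))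
  -- the full linear combination vanishes
  have hsum : ∀ (T : Finset (Fin n)), S ⊆ T → ∑ j ∈ T, v j • Aᵀ j = 0 := by
    intro T hST
    have : ∑ j ∈ T, v j • Aᵀ j = ∑ j, v j • Aᵀ j := by
      apply Finset.sum_subset (Finset.subset_univ T)
      intro j _ hjT
      have : v j = 0 := by
        by_contra h
        exact hjT (hST (Finset.mem_filter.2 ⟨Finset.mem_univ _, h⟩))
      simp [this]
    rw [this]
    funext i
    have := hrow i
    simpa [Finset.sum_apply, mul_comm] using this
  -- key inequality
  have key : r₀ ≤ N.card * ℓ := by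
    by_contra hcon
    push_neg at hcon
    -- case on |S| ≤ r₀
    rcases le_or_gt S.card r₀ with hle | hgt
    · -- S itself independent, so v = 0
      have hSind := colsIndep_subset A hind hr₀n S hle
      rw [Fintype.linearIndependent_iff] at hSind
      have hz := hSind (fun j => v (j : Fin n)) (by
        have := hsum S (le_refl _)
        have e : ∑ j : S, v (j : Fin n) • Aᵀ (j : Fin n) = ∑ j ∈ S, v j • Aᵀ j :=
          Finset.sum_coe_sort S (fun j => v j • Aᵀ j)
        rw [e, this])
      apply hv0
      funext j
      by_cases hj : j ∈ S
      · exact hz ⟨j, hj⟩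
      · rw [hSdef, Finset.mem_filter] at hj
        push_neg at hj
        exact hj (Finset.mem_univ _)
    · -- pick S' ⊆ S of card N.card * ℓ + 1 ≤ r₀
      obtain ⟨S', hS'S, hS'card⟩ := Finset.exists_subset_card_eq
        (s := S) (n := N.card * ℓ + 1) (by omega)
      have hS'ind := colsIndep_subset A hind hr₀n S' (by omega)
      -- the restricted family to R is linearly independent
      have hres : LinearIndependent ℝ
          (fun j : S' => (fun i : R => Aᵀ (j : Fin n) (i : Fin m))) := by
        rw [Fintype.linearIndependent_iff]
        intro g hg
        have hfull : ∑ j : S', g j • Aᵀ (j : Fin n) = 0 := by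
          funext i
          by_cases hi : i ∈ R
          · have := congrFun hg ⟨i, hi⟩
            simpa [Finset.sum_apply] using this
          · have : ∀ j : S', A i (j : Fin n) = 0 :=
              fun j => F2 _ (hS'S j.2) i hi
            simp [Finset.sum_apply, Matrix.transpose_apply, this]
        exact fun j => (Fintype.linearIndependent_iff.1 hS'ind) g hfull j
      -- dimension count
      have hcard : Fintype.card S' ≤ Module.finrank ℝ (↥R → ℝ) :=
        hres.fintype_card_le_finrank
      rw [Module.finrank_fintype_fun_eq_card] at hcard
      simp only [Fintype.card_coe] at hcard
      omega
  -- conclude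
  rcases Nat.eq_zero_or_pos ℓ with hl | hl
  · subst hl
    simp
  · rw [div_le_iff₀ (by exact_mod_cast hl)]
    calc (r₀ : ℝ) ≤ (N.card * ℓ : ℕ) := by exact_mod_cast key
      _ = (N.card : ℝ) * ℓ := by push_cast; ring
end

section
/- For d ≥ 3 and D ∈ {2,3}, every (2^{D−1} − 1)-sparse nonnegative vector x* is the unique element of {x : A_d^D x = A_d^D x*, x ≥ 0}. -/
open Matrix Kronecker

/-- The matrix `M = [−1ᵀ_{d−1}; I_{d−1}] ∈ ℝ^{d×(d−1)}`. -/
def Mmat (d : ℕ) : Matrix (Fin d) (Fin (d - 1)) ℝ :=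
  Matrix.of fun i j => if (i : ℕ) = 0 then -1 else if (i : ℕ) = (j : ℕ) + 1 then 1 else 0

/-- The all-ones row vector `1_dᵀ ∈ ℝ^{1×d}`. -/
def onesRow (d : ℕ) : Matrix (Fin 1) (Fin d) ℝ := Matrix.of fun _ _ => 1

/-- 2D tomography matrix `A_d^2 = [I_d ⊗ 1_dᵀ ; 1_dᵀ ⊗ I_d]`. -/
def A2 (d : ℕ) : Matrix ((Fin d × Fin 1) ⊕ (Fin 1 × Fin d)) (Fin d × Fin d) ℝ :=
  Matrix.fromRows ((1 : Matrix (Fin d) (Fin d) ℝ) ⊗ₖ onesRow d)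
    (onesRow d ⊗ₖ (1 : Matrix (Fin d) (Fin d) ℝ))

/-- 3D tomography matrix `A_d^3 = [1ᵀ⊗I⊗I ; I⊗1ᵀ⊗I ; I⊗I⊗1ᵀ]`. -/
def A3 (d : ℕ) :
    Matrix (((Fin 1 × Fin d) × Fin d) ⊕ (((Fin d × Fin 1) × Fin d) ⊕ ((Fin d × Fin d) × Fin 1)))
      ((Fin d × Fin d) × Fin d) ℝ :=
  Matrix.fromRows ((onesRow d ⊗ₖ (1 : Matrix (Fin d) (Fin d) ℝ)) ⊗ₖ (1 : Matrix (Fin d) (Fin d) ℝ))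
    (Matrix.fromRows
      (((1 : Matrix (Fin d) (Fin d) ℝ) ⊗ₖ onesRow d) ⊗ₖ (1 : Matrix (Fin d) (Fin d) ℝ))
      (((1 : Matrix (Fin d) (Fin d) ℝ) ⊗ₖ (1 : Matrix (Fin d) (Fin d) ℝ)) ⊗ₖ onesRow d))

/-- `B_d^2 = M ⊗ M`. -/
def B2 (d : ℕ) : Matrix (Fin d × Fin d) (Fin (d - 1) × Fin (d - 1)) ℝ :=
  Mmat d ⊗ₖ Mmat d

/-- `B_d^3 = M ⊗ M ⊗ M`. -/
def B3 (d : ℕ) :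
    Matrix ((Fin d × Fin d) × Fin d) ((Fin (d - 1) × Fin (d - 1)) × Fin (d - 1)) ℝ :=
  (Mmat d ⊗ₖ Mmat d) ⊗ₖ Mmat d


lemma exists_neg_of_sum_eq_zero {ι : Type*} [Fintype ι] {f : ι → ℝ}
    (h0 : ∑ j, f j = 0) {i : ι} (hi : 0 < f i) : ∃ j, f j < 0 := by
  by_contra hc
  push_neg at hc
  have := Finset.single_le_sum (fun j _ => hc j) (Finset.mem_univ i)
  linarith

lemma exists_pos_of_sum_eq_zero {ι : Type*} [Fintype ι] {f : ι → ℝ}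
    (h0 : ∑ j, f j = 0) {i : ι} (hi : f i < 0) : ∃ j, 0 < f j := by
  have h0' : ∑ j, (fun j => -f j) j = 0 := by simp [h0]
  obtain ⟨j, hj⟩ := exists_neg_of_sum_eq_zero h0' (i := i) (by simpa using hi)
  exact ⟨j, by simpa using hj⟩

lemma key2 {d : ℕ} (h : Fin d × Fin d → ℝ)
    (h1 : ∀ j, ∑ a, h (a, j) = 0)
    (h2 : ∀ i, ∑ b, h (i, b) = 0)
    (hN : (Finset.univ.filter (fun p => h p < 0)).card ≤ 1) :
    h = 0 := by
  by_cases hP : ∃ p, 0 < h p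
  · exfalso
    obtain ⟨⟨i, j⟩, hp⟩ := hP
    obtain ⟨a1, ha1⟩ := exists_neg_of_sum_eq_zero (h1 j) hp
    obtain ⟨b1, hb1⟩ := exists_neg_of_sum_eq_zero (h2 i) hp
    have hai : a1 ≠ i := by rintro rfl; linarith
    have hne : ((a1, j) : Fin d × Fin d) ≠ (i, b1) := by
      simp only [ne_eq, Prod.mk.injEq]; tauto
    have hsub : ({(a1, j), (i, b1)} : Finset (Fin d × Fin d)) ⊆
        Finset.univ.filter (fun p => h p < 0) := by
      intro p hp'
      simp only [Finset.mem_insert, Finset.mem_singleton] at hp'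
      simp only [Finset.mem_filter, Finset.mem_univ, true_and]
      rcases hp' with rfl | rfl <;> assumption
    have hcard : ({(a1, j), (i, b1)} : Finset (Fin d × Fin d)).card = 2 := by
      rw [Finset.card_insert_of_notMem (by simp [hne]), Finset.card_singleton]
    have := Finset.card_le_card hsub
    omega
  · push_neg at hP
    funext p
    obtain ⟨i, j⟩ := p
    have hz : ∀ b ∈ Finset.univ, -h (i, b) = 0 :=
      (Finset.sum_eq_zero_iff_of_nonneg
        (fun b _ => neg_nonneg.2 (hP (i, b)))).1
        (by rw [Finset.sum_neg_distrib, h2 i, neg_zero])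
    simpa using neg_eq_zero.1 (hz j (Finset.mem_univ j))

lemma key3 {d : ℕ} (h : (Fin d × Fin d) × Fin d → ℝ)
    (h1 : ∀ j k, ∑ a, h ((a, j), k) = 0)
    (h2 : ∀ i k, ∑ b, h ((i, b), k) = 0)
    (h3 : ∀ i j, ∑ c, h ((i, j), c) = 0)
    (hN : (Finset.univ.filter (fun p => h p < 0)).card ≤ 3) :
    h = 0 := by
  by_cases hP : ∃ p, 0 < h p
  · exfalso
    obtain ⟨⟨⟨i, j⟩, k⟩, hp⟩ := hP
    obtain ⟨a1, ha1⟩ := exists_neg_of_sum_eq_zero (h1 j k) hp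
    obtain ⟨b1, hb1⟩ := exists_neg_of_sum_eq_zero (h2 i k) hp
    obtain ⟨c1, hc1⟩ := exists_neg_of_sum_eq_zero (h3 i j) hp
    obtain ⟨a2, ha2⟩ := exists_pos_of_sum_eq_zero (h1 j c1) hc1
    obtain ⟨b2, hb2⟩ := exists_neg_of_sum_eq_zero (h2 a2 c1) ha2
    have hai : a1 ≠ i := by rintro rfl; linarith
    have hbj : b1 ≠ j := by rintro rfl; linarith
    have hck : c1 ≠ k := by rintro rfl; linarith
    have ha2i : a2 ≠ i := by rintro rfl; linarith
    have hb2j : b2 ≠ j := by rintro rfl; linarith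
    have e12 : (((a1, j), k) : (Fin d × Fin d) × Fin d) ≠ ((i, b1), k) := by
      simp only [ne_eq, Prod.mk.injEq]; tauto
    have e13 : (((a1, j), k) : (Fin d × Fin d) × Fin d) ≠ ((i, j), c1) := by
      simp only [ne_eq, Prod.mk.injEq]; tauto
    have e14 : (((a1, j), k) : (Fin d × Fin d) × Fin d) ≠ ((a2, b2), c1) := by
      simp only [ne_eq, Prod.mk.injEq]; tauto
    have e23 : (((i, b1), k) : (Fin d × Fin d) × Fin d) ≠ ((i, j), c1) := by
      simp only [ne_eq, Prod.mk.injEq]; tauto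
    have e24 : (((i, b1), k) : (Fin d × Fin d) × Fin d) ≠ ((a2, b2), c1) := by
      simp only [ne_eq, Prod.mk.injEq]; tauto
    have e34 : (((i, j), c1) : (Fin d × Fin d) × Fin d) ≠ ((a2, b2), c1) := by
      simp only [ne_eq, Prod.mk.injEq]; tauto
    have hsub : ({((a1, j), k), ((i, b1), k), ((i, j), c1), ((a2, b2), c1)} :
        Finset ((Fin d × Fin d) × Fin d)) ⊆ Finset.univ.filter (fun p => h p < 0) := by
      intro p hp'
      simp only [Finset.mem_insert, Finset.mem_singleton] at hp'
      simp only [Finset.mem_filter, Finset.mem_univ, true_and]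
      rcases hp' with rfl | rfl | rfl | rfl <;> assumption
    have hcard : ({((a1, j), k), ((i, b1), k), ((i, j), c1), ((a2, b2), c1)} :
        Finset ((Fin d × Fin d) × Fin d)).card = 4 := by
      rw [Finset.card_insert_of_notMem (by simp [e12, e13, e14]),
          Finset.card_insert_of_notMem (by simp [e23, e24]),
          Finset.card_insert_of_notMem (by simp [e34]), Finset.card_singleton]
    have := Finset.card_le_card hsub
    omega
  · push_neg at hP
    funext p
    obtain ⟨⟨i, j⟩, k⟩ := p
    have hz : ∀ c ∈ Finset.univ, -h ((i, j), c) = 0 :=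
      (Finset.sum_eq_zero_iff_of_nonneg
        (fun c _ => neg_nonneg.2 (hP ((i, j), c)))).1
        (by rw [Finset.sum_neg_distrib, h3 i j, neg_zero])
    simpa using neg_eq_zero.1 (hz k (Finset.mem_univ k))

lemma A2_inl (d : ℕ) (x : Fin d × Fin d → ℝ) (i : Fin d) (t : Fin 1) :
    (A2 d).mulVec x (Sum.inl (i, t)) = ∑ b, x (i, b) := by
  simp [A2, Matrix.mulVec, dotProduct, Matrix.fromRows_apply_inl, Matrix.fromRows_apply_inr, onesRow,
        Matrix.one_apply, Fintype.sum_prod_type, ite_mul, mul_ite]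
  rw [Finset.sum_comm]
  simp

lemma A2_inr (d : ℕ) (x : Fin d × Fin d → ℝ) (j : Fin d) (t : Fin 1) :
    (A2 d).mulVec x (Sum.inr (t, j)) = ∑ a, x (a, j) := by
  simp [A2, Matrix.mulVec, dotProduct, Matrix.fromRows_apply_inl, Matrix.fromRows_apply_inr, onesRow,
        Matrix.one_apply, Fintype.sum_prod_type, ite_mul, mul_ite]

lemma A3_r1 (d : ℕ) (x : (Fin d × Fin d) × Fin d → ℝ) (j k : Fin d) (t : Fin 1) :
    (A3 d).mulVec x (Sum.inl ((t, j), k)) = ∑ a, x ((a, j), k) := by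
  simp [A3, Matrix.mulVec, dotProduct, Matrix.fromRows_apply_inl, Matrix.fromRows_apply_inr, onesRow,
        Matrix.one_apply, Fintype.sum_prod_type, ite_mul, mul_ite]

lemma A3_r2 (d : ℕ) (x : (Fin d × Fin d) × Fin d → ℝ) (i k : Fin d) (t : Fin 1) :
    (A3 d).mulVec x (Sum.inr (Sum.inl ((i, t), k))) = ∑ b, x ((i, b), k) := by
  simp [A3, Matrix.mulVec, dotProduct, Matrix.fromRows_apply_inl, Matrix.fromRows_apply_inr, onesRow,
        Matrix.one_apply, Fintype.sum_prod_type, ite_mul, mul_ite]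
  rw [Finset.sum_comm]
  simp

lemma A3_r3 (d : ℕ) (x : (Fin d × Fin d) × Fin d → ℝ) (i j : Fin d) (t : Fin 1) :
    (A3 d).mulVec x (Sum.inr (Sum.inr ((i, j), t))) = ∑ c, x ((i, j), c) := by
  simp [A3, Matrix.mulVec, dotProduct, Matrix.fromRows_apply_inl, Matrix.fromRows_apply_inr, onesRow,
        Matrix.one_apply, Fintype.sum_prod_type, ite_mul, mul_ite]
  simp only [show ∀ (a b : Fin d), (i = a ∧ j = b) = (j = b ∧ i = a) from
      fun a b => propext and_comm, ite_and, Finset.sum_ite_eq, Finset.mem_univ, if_true]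


/-- for `d ≥ 3`, `D ∈ {2,3}`, every `(2^{D-1} - 1)`-sparse
nonnegative vector `x*` is the unique element of `{x : A_d^D x = A_d^D x*, x ≥ 0}`. -/
theorem stmt12 (d : ℕ) (hd : 3 ≤ d) :
    (∀ xstar : Fin d × Fin d → ℝ, 0 ≤ xstar →
      (Finset.univ.filter (fun i => xstar i ≠ 0)).card ≤ 2 ^ 1 - 1 →
      {x : Fin d × Fin d → ℝ | (A2 d).mulVec x = (A2 d).mulVec xstar ∧ 0 ≤ x}
        = {xstar}) ∧
    (∀ xstar : (Fin d × Fin d) × Fin d → ℝ, 0 ≤ xstar →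
      (Finset.univ.filter (fun i => xstar i ≠ 0)).card ≤ 2 ^ 2 - 1 →
      {x : (Fin d × Fin d) × Fin d → ℝ |
          (A3 d).mulVec x = (A3 d).mulVec xstar ∧ 0 ≤ x} = {xstar}) := by
  constructor
  · intro xstar hx0 hcard
    apply Set.eq_singleton_iff_unique_mem.2
    refine ⟨⟨rfl, hx0⟩, ?_⟩
    rintro x ⟨hAx, hxnn⟩
    set h : Fin d × Fin d → ℝ := fun p => x p - xstar p with hh
    have hrow : ∀ i, ∑ b, h (i, b) = 0 := by
      intro i
      have := congrFun hAx (Sum.inl (i, 0))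
      rw [A2_inl, A2_inl] at this
      simp [hh, Finset.sum_sub_distrib, this]
    have hcol : ∀ j, ∑ a, h (a, j) = 0 := by
      intro j
      have := congrFun hAx (Sum.inr (0, j))
      rw [A2_inr, A2_inr] at this
      simp [hh, Finset.sum_sub_distrib, this]
    have hNsub : Finset.univ.filter (fun p => h p < 0) ⊆
        Finset.univ.filter (fun p => xstar p ≠ 0) := by
      intro p hp
      simp only [Finset.mem_filter, Finset.mem_univ, true_and, hh] at hp ⊢
      intro hz
      have hxp : (0 : ℝ) ≤ x p := hxnn p
      rw [hz] at hp
      linarith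
    have hzero := key2 h hcol hrow
      (le_trans (Finset.card_le_card hNsub) (by simpa using hcard))
    funext p
    have := congrFun hzero p
    simp only [hh, Pi.zero_apply] at this
    linarith
  · intro xstar hx0 hcard
    apply Set.eq_singleton_iff_unique_mem.2
    refine ⟨⟨rfl, hx0⟩, ?_⟩
    rintro x ⟨hAx, hxnn⟩
    set h : (Fin d × Fin d) × Fin d → ℝ := fun p => x p - xstar p with hh
    have hr1 : ∀ j k, ∑ a, h ((a, j), k) = 0 := by
      intro j k
      have := congrFun hAx (Sum.inl ((0, j), k))
      rw [A3_r1, A3_r1] at this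
      simp [hh, Finset.sum_sub_distrib, this]
    have hr2 : ∀ i k, ∑ b, h ((i, b), k) = 0 := by
      intro i k
      have := congrFun hAx (Sum.inr (Sum.inl ((i, 0), k)))
      rw [A3_r2, A3_r2] at this
      simp [hh, Finset.sum_sub_distrib, this]
    have hr3 : ∀ i j, ∑ c, h ((i, j), c) = 0 := by
      intro i j
      have := congrFun hAx (Sum.inr (Sum.inr ((i, j), 0)))
      rw [A3_r3, A3_r3] at this
      simp [hh, Finset.sum_sub_distrib, this]
    have hNsub : Finset.univ.filter (fun p => h p < 0) ⊆
        Finset.univ.filter (fun p => xstar p ≠ 0) := by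
      intro p hp
      simp only [Finset.mem_filter, Finset.mem_univ, true_and, hh] at hp ⊢
      intro hz
      have hxp : (0 : ℝ) ≤ x p := hxnn p
      rw [hz] at hp
      linarith
    have hzero := key3 h hr1 hr2 hr3
      (le_trans (Finset.card_le_card hNsub) (by simpa using hcard))
    funext p
    have := congrFun hzero p
    simp only [hh, Pi.zero_apply] at this
    linarith
end
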